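/- Let R ⊆ α × β, S ⊆ β × γ, T ⊆ γ × α be finite relations and let C3 = {(x,y,z) : (x,y) ∈ R, (y,z) ∈ S, (z,x) ∈ T} be the triangle join. Then |C3| ≤ ( (Σ_{x ∈ α} |{y : (x,y) ∈ R}|³) · (Σ_{z ∈ γ} |{y : (y,z) ∈ S}|³) · |T|⁵ )^{1/6}. (The q-inequality |C3| ≤ (‖deg_R(Y|X)‖_3³ · ‖deg_S(Y|Z)‖_3³ · |T|⁵)^{1/6}.) -/

import Mathlib

set_option maxHeartbeats 1000000


set_option linter.unusedSectionVars false

open Finset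

section Main
variable {α β γ : Type*} [Fintype α] [Fintype β] [Fintype γ]
    [DecidableEq α] [DecidableEq β] [DecidableEq γ]
    (R : Finset (α × β)) (S : Finset (β × γ)) (T : Finset (γ × α))

-- counting: triangles = sum over T of common neighbours
lemma tri_aux_count_eq :
    (Finset.univ.filter
        (fun t : α × β × γ =>
          (t.1, t.2.1) ∈ R ∧ (t.2.1, t.2.2) ∈ S ∧ (t.2.2, t.1) ∈ T)).card
    = ∑ p ∈ T, (Finset.univ.filter (fun y : β => (p.2, y) ∈ R ∧ (y, p.1) ∈ S)).card := by
  rw [Finset.card_eq_sum_card_fiberwise (f := fun t : α × β × γ => (t.2.2, t.1)) (t := T)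
    (fun t ht => (Finset.mem_filter.1 ht).2.2.2)]
  refine Finset.sum_congr rfl fun p hp => ?_
  refine Finset.card_bij' (fun t _ => t.2.1) (fun y _ => (p.2, y, p.1)) ?_ ?_ ?_ ?_
  · intro t ht
    simp only [Finset.mem_filter, Finset.mem_univ, true_and, Prod.ext_iff] at ht ⊢
    obtain ⟨⟨h1, h2, h3⟩, h4, h5⟩ := ht
    rw [← h4, ← h5]
    exact ⟨h1, h2⟩
  · intro y hy
    simp only [Finset.mem_filter, Finset.mem_univ, true_and] at hy ⊢
    exact ⟨⟨hy.1, hy.2, hp⟩, trivial⟩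
  · intro t ht
    simp only [Finset.mem_filter, Finset.mem_univ, true_and, Prod.ext_iff] at ht
    obtain ⟨⟨h1, h2, h3⟩, h4, h5⟩ := ht
    simp [← h4, ← h5]
  · intro y hy
    rfl

-- e ≤ dR and e ≤ dS
lemma tri_aux_e_le_dR (p : γ × α) :
    (Finset.univ.filter (fun y : β => (p.2, y) ∈ R ∧ (y, p.1) ∈ S)).card
      ≤ (R.filter (fun t => t.1 = p.2)).card := by
  apply Finset.card_le_card_of_injOn (fun y => (p.2, y))
  · intro y hy
    simp only [Finset.mem_filter, Finset.mem_univ, true_and] at hy ⊢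
    exact Finset.mem_coe.2 (Finset.mem_filter.2 ⟨(Finset.mem_filter.1 (Finset.mem_coe.1 hy)).2.1, rfl⟩)
  · intro y _ y' _ hyy
    exact (Prod.ext_iff.1 hyy).2

lemma tri_aux_e_le_dS (p : γ × α) :
    (Finset.univ.filter (fun y : β => (p.2, y) ∈ R ∧ (y, p.1) ∈ S)).card
      ≤ (S.filter (fun t => t.2 = p.1)).card := by
  apply Finset.card_le_card_of_injOn (fun y => (y, p.1))
  · intro y hy
    simp only [Finset.mem_filter, Finset.mem_univ, true_and] at hy ⊢
    exact Finset.mem_coe.2 (Finset.mem_filter.2 ⟨(Finset.mem_filter.1 (Finset.mem_coe.1 hy)).2.2, rfl⟩)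
  · intro y _ y' _ hyy
    exact (Prod.ext_iff.1 hyy).1

-- path count: ∑_{p ∈ T} c(p.2) d(p.1) ≤ |T|^2
lemma tri_aux_path_count :
    ∑ p ∈ T, (T.filter (fun q => q.2 = p.2)).card * (T.filter (fun r => r.1 = p.1)).card
      ≤ T.card * T.card := by
  have expand : ∀ p : γ × α,
      (T.filter (fun q => q.2 = p.2)).card * (T.filter (fun r => r.1 = p.1)).card
      = ∑ q ∈ T, ∑ r ∈ T, (if q.2 = p.2 ∧ r.1 = p.1 then 1 else 0) := by
    intro p
    rw [Finset.card_filter, Finset.card_filter, Finset.sum_mul_sum]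
    exact Finset.sum_congr rfl fun q _ => Finset.sum_congr rfl fun r _ => by
      by_cases h1 : q.2 = p.2 <;> by_cases h2 : r.1 = p.1 <;> simp [h1, h2]
  calc ∑ p ∈ T, (T.filter (fun q => q.2 = p.2)).card * (T.filter (fun r => r.1 = p.1)).card
      = ∑ p ∈ T, ∑ q ∈ T, ∑ r ∈ T, (if q.2 = p.2 ∧ r.1 = p.1 then 1 else 0) :=
        Finset.sum_congr rfl fun p _ => expand p
    _ = ∑ q ∈ T, ∑ p ∈ T, ∑ r ∈ T, (if q.2 = p.2 ∧ r.1 = p.1 then 1 else 0) :=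
        Finset.sum_comm
    _ = ∑ q ∈ T, ∑ r ∈ T, ∑ p ∈ T, (if q.2 = p.2 ∧ r.1 = p.1 then 1 else 0) :=
        Finset.sum_congr rfl fun q _ => Finset.sum_comm
    _ ≤ ∑ _q ∈ T, ∑ _r ∈ T, 1 := by
        refine Finset.sum_le_sum fun q _ => Finset.sum_le_sum fun r _ => ?_
        rw [← Finset.card_filter]
        refine Finset.card_le_one.2 ?_ |>.trans le_rfl
        intro a ha b hb
        simp only [Finset.mem_filter] at ha hb
        exact Prod.ext_iff.2 ⟨(ha.2.2).symm.trans hb.2.2, (ha.2.1).symm.trans hb.2.1⟩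
    _ = T.card * T.card := by simp [mul_comm]

end Main

open Finset

lemma tri_aux_fiber_div_sum_le {ι κ : Type*} [Fintype κ] [DecidableEq κ] [DecidableEq ι]
    (s : Finset ι) (m : ι → κ) (ψ : κ → ℝ) (hψ : ∀ k, 0 ≤ ψ k) :
    ∑ p ∈ s, ψ (m p) / ((s.filter (fun q => m q = m p)).card : ℝ) ≤ ∑ k, ψ k := by
  rw [← Finset.sum_fiberwise_of_maps_to (g := m) (fun p _ => Finset.mem_univ (m p))
    (f := fun p => ψ (m p) / ((s.filter (fun q => m q = m p)).card : ℝ))]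
  apply Finset.sum_le_sum
  intro k _
  have hcongr : ∀ p ∈ s.filter (fun q => m q = k),
      ψ (m p) / ((s.filter (fun q => m q = m p)).card : ℝ)
        = ψ k / ((s.filter (fun q => m q = k)).card : ℝ) := by
    intro p hp
    rw [(Finset.mem_filter.1 hp).2]
  rw [Finset.sum_congr rfl hcongr, Finset.sum_const, nsmul_eq_mul]
  rcases eq_or_ne ((s.filter (fun q => m q = k)).card) 0 with h0 | h0
  · rw [h0]; simp [hψ k]
  · rw [mul_comm, div_mul_cancel₀]
    exact_mod_cast h0

open Finset

lemma tri_aux_holder3 {ι : Type*} (s : Finset ι) (f g h : ι → ℝ)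
    (hf : ∀ i ∈ s, 0 ≤ f i) (hg : ∀ i ∈ s, 0 ≤ g i) (hh : ∀ i ∈ s, 0 ≤ h i) :
    (∑ i ∈ s, f i * g i * h i) ^ 3
      ≤ (∑ i ∈ s, f i ^ 3) * ((∑ i ∈ s, g i ^ 3) * (∑ i ∈ s, h i ^ 3)) := by
  have hpq : Real.HolderConjugate 3 (3/2) := Real.holderConjugate_iff.mpr ⟨by norm_num, by norm_num⟩
  have hgh : ∀ i ∈ s, 0 ≤ g i * h i := fun i hi => mul_nonneg (hg i hi) (hh i hi)
  set X := ∑ i ∈ s, f i ^ 3 with hX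
  set Y := ∑ i ∈ s, g i ^ 3 with hY
  set Z := ∑ i ∈ s, h i ^ 3 with hZ
  set W := ∑ i ∈ s, (g i * h i) ^ ((3:ℝ)/2) with hW
  have hX0 : 0 ≤ X := sum_nonneg fun i hi => pow_nonneg (hf i hi) 3
  have hY0 : 0 ≤ Y := sum_nonneg fun i hi => pow_nonneg (hg i hi) 3
  have hZ0 : 0 ≤ Z := sum_nonneg fun i hi => pow_nonneg (hh i hi) 3
  have hW0 : 0 ≤ W := sum_nonneg fun i hi => Real.rpow_nonneg (hgh i hi) _
  have h1 : ∑ i ∈ s, f i * (g i * h i)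
      ≤ X ^ (1/(3:ℝ)) * W ^ (1/((3:ℝ)/2)) := by
    have H := Real.inner_le_Lp_mul_Lq_of_nonneg s hpq hf hgh
    have e1 : ∑ i ∈ s, f i ^ (3:ℝ) = X := sum_congr rfl fun i hi => by
      rw [show (3:ℝ) = ((3:ℕ):ℝ) by norm_num, Real.rpow_natCast]
    rwa [e1] at H
  have h2 : W ^ 2 ≤ Y * Z := by
    have := sum_mul_sq_le_sq_mul_sq s (fun i => g i ^ ((3:ℝ)/2)) (fun i => h i ^ ((3:ℝ)/2))
    calc W ^ 2 = (∑ i ∈ s, g i ^ ((3:ℝ)/2) * h i ^ ((3:ℝ)/2)) ^ 2 := by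
          rw [hW]
          congr 1
          exact sum_congr rfl fun i hi => Real.mul_rpow (hg i hi) (hh i hi)
      _ ≤ (∑ i ∈ s, (g i ^ ((3:ℝ)/2)) ^ 2) * ∑ i ∈ s, (h i ^ ((3:ℝ)/2)) ^ 2 := this
      _ = Y * Z := by
          congr 1
          · exact sum_congr rfl fun i hi => by
              rw [← Real.rpow_natCast (g i ^ ((3:ℝ)/2)) 2, ← Real.rpow_mul (hg i hi)]
              norm_num
          · exact sum_congr rfl fun i hi => by
              rw [← Real.rpow_natCast (h i ^ ((3:ℝ)/2)) 2, ← Real.rpow_mul (hh i hi)]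
              norm_num
  have h3 : W ^ (1/((3:ℝ)/2)) ≤ (Y * Z) ^ (1/(3:ℝ)) := by
    have : W ^ (1/((3:ℝ)/2)) = (W ^ 2) ^ (1/(3:ℝ)) := by
      rw [← Real.rpow_natCast W 2, ← Real.rpow_mul hW0]
      norm_num
    rw [this]
    exact Real.rpow_le_rpow (by positivity) h2 (by norm_num)
  have h4 : ∑ i ∈ s, f i * g i * h i ≤ (X * (Y * Z)) ^ (1/(3:ℝ)) := by
    calc ∑ i ∈ s, f i * g i * h i = ∑ i ∈ s, f i * (g i * h i) := by
          exact sum_congr rfl fun i _ => mul_assoc _ _ _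
      _ ≤ X ^ (1/(3:ℝ)) * W ^ (1/((3:ℝ)/2)) := h1
      _ ≤ X ^ (1/(3:ℝ)) * (Y * Z) ^ (1/(3:ℝ)) := by
          exact mul_le_mul_of_nonneg_left h3 (Real.rpow_nonneg hX0 _)
      _ = (X * (Y * Z)) ^ (1/(3:ℝ)) := (Real.mul_rpow hX0 (by positivity)).symm
  calc (∑ i ∈ s, f i * g i * h i) ^ 3 ≤ ((X * (Y * Z)) ^ (1/(3:ℝ))) ^ 3 := by
        apply pow_le_pow_left₀ (sum_nonneg fun i hi =>
          mul_nonneg (mul_nonneg (hf i hi) (hg i hi)) (hh i hi)) h4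
    _ = X * (Y * Z) := by
        rw [← Real.rpow_natCast ((X * (Y * Z)) ^ (1/(3:ℝ))) 3, ← Real.rpow_mul (by positivity)]
        norm_num

open Finset

theorem triangle_l3_bound {α β γ : Type*} [Fintype α] [Fintype β] [Fintype γ]
    [DecidableEq α] [DecidableEq β] [DecidableEq γ]
    (R : Finset (α × β)) (S : Finset (β × γ)) (T : Finset (γ × α)) :
    ((Finset.univ.filter
        (fun t : α × β × γ =>
          (t.1, t.2.1) ∈ R ∧ (t.2.1, t.2.2) ∈ S ∧ (t.2.2, t.1) ∈ T)).card : ℝ)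
    ≤ ((∑ x, ((R.filter (fun t => t.1 = x)).card : ℝ) ^ 3)
        * (∑ z, ((S.filter (fun t => t.2 = z)).card : ℝ) ^ 3)
        * (T.card : ℝ) ^ 5) ^ ((1 : ℝ) / 6) := by
  classical
  have hpow : ∀ u : ℝ, 0 ≤ u → (u ^ ((1:ℝ)/3)) ^ 3 = u := fun u hu => by
    rw [← Real.rpow_natCast (u ^ ((1:ℝ)/3)) 3, ← Real.rpow_mul hu]
    norm_num
  set N := (Finset.univ.filter
        (fun t : α × β × γ =>
          (t.1, t.2.1) ∈ R ∧ (t.2.1, t.2.2) ∈ S ∧ (t.2.2, t.1) ∈ T)).card with hNdef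
  set A := ∑ x, ((R.filter (fun t => t.1 = x)).card : ℝ) ^ 3 with hAdef
  set B := ∑ z, ((S.filter (fun t => t.2 = z)).card : ℝ) ^ 3 with hBdef
  have hA0 : 0 ≤ A := hAdef ▸ Finset.sum_nonneg fun x _ => by positivity
  have hB0 : 0 ≤ B := hBdef ▸ Finset.sum_nonneg fun z _ => by positivity
  set P := ∑ p ∈ T, ((R.filter (fun t => t.1 = p.2)).card : ℝ)
      * ((S.filter (fun t => t.2 = p.1)).card : ℝ) with hPdef
  have hP0 : 0 ≤ P := hPdef ▸ Finset.sum_nonneg fun p _ => by positivity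
  -- step 1 : N² ≤ |T| * P
  have hN2 : (N : ℝ) ^ 2 ≤ (T.card : ℝ) * P := by
    have h0 : (N : ℝ)
        = ∑ p ∈ T, ((Finset.univ.filter
            (fun y : β => (p.2, y) ∈ R ∧ (y, p.1) ∈ S)).card : ℝ) := by
      rw [hNdef, tri_aux_count_eq R S T]
      push_cast
      ring
    have hCS := sq_sum_le_card_mul_sum_sq (s := T)
      (f := fun p => ((Finset.univ.filter
            (fun y : β => (p.2, y) ∈ R ∧ (y, p.1) ∈ S)).card : ℝ))
    rw [h0]
    refine hCS.trans ?_
    rw [hPdef]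
    refine mul_le_mul_of_nonneg_left (Finset.sum_le_sum fun p _ => ?_) (by positivity)
    rw [sq]
    exact_mod_cast Nat.mul_le_mul (tri_aux_e_le_dR R S p) (tri_aux_e_le_dS R S p)
  -- step 2 : P³ ≤ A * (B * |T|²)
  have hP3 : P ^ 3 ≤ A * (B * (T.card : ℝ) ^ 2) := by
    have hH := tri_aux_holder3 T
      (fun p => ((R.filter (fun t => t.1 = p.2)).card : ℝ)
          / ((T.filter (fun q => q.2 = p.2)).card : ℝ) ^ ((1:ℝ)/3))
      (fun p => ((S.filter (fun t => t.2 = p.1)).card : ℝ)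
          / ((T.filter (fun q => q.1 = p.1)).card : ℝ) ^ ((1:ℝ)/3))
      (fun p => ((T.filter (fun q => q.2 = p.2)).card : ℝ) ^ ((1:ℝ)/3)
          * ((T.filter (fun q => q.1 = p.1)).card : ℝ) ^ ((1:ℝ)/3))
      (fun p _ => by positivity) (fun p _ => by positivity) (fun p _ => by positivity)
    have hfgh : ∑ p ∈ T,
        (((R.filter (fun t => t.1 = p.2)).card : ℝ)
          / ((T.filter (fun q => q.2 = p.2)).card : ℝ) ^ ((1:ℝ)/3))
        * (((S.filter (fun t => t.2 = p.1)).card : ℝ)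
          / ((T.filter (fun q => q.1 = p.1)).card : ℝ) ^ ((1:ℝ)/3))
        * (((T.filter (fun q => q.2 = p.2)).card : ℝ) ^ ((1:ℝ)/3)
          * ((T.filter (fun q => q.1 = p.1)).card : ℝ) ^ ((1:ℝ)/3)) = P := by
      rw [hPdef]
      refine Finset.sum_congr rfl fun p hp => ?_
      have hc0 : (0:ℝ) < ((T.filter (fun q => q.2 = p.2)).card : ℝ) := by
        have hmem : p ∈ T.filter (fun q => q.2 = p.2) :=
          Finset.mem_filter.2 ⟨hp, rfl⟩
        exact_mod_cast Finset.card_pos.2 ⟨p, hmem⟩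
      have hd0 : (0:ℝ) < ((T.filter (fun q => q.1 = p.1)).card : ℝ) := by
        have hmem : p ∈ T.filter (fun q => q.1 = p.1) :=
          Finset.mem_filter.2 ⟨hp, rfl⟩
        exact_mod_cast Finset.card_pos.2 ⟨p, hmem⟩
      have hcr : (0:ℝ) < ((T.filter (fun q => q.2 = p.2)).card : ℝ) ^ ((1:ℝ)/3) :=
        Real.rpow_pos_of_pos hc0 _
      have hdr : (0:ℝ) < ((T.filter (fun q => q.1 = p.1)).card : ℝ) ^ ((1:ℝ)/3) :=
        Real.rpow_pos_of_pos hd0 _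
      field_simp
    rw [hfgh] at hH
    refine hH.trans ?_
    have hf3 : ∑ p ∈ T,
        (((R.filter (fun t => t.1 = p.2)).card : ℝ)
          / ((T.filter (fun q => q.2 = p.2)).card : ℝ) ^ ((1:ℝ)/3)) ^ 3 ≤ A := by
      have heq : ∀ p ∈ T, (((R.filter (fun t => t.1 = p.2)).card : ℝ)
          / ((T.filter (fun q => q.2 = p.2)).card : ℝ) ^ ((1:ℝ)/3)) ^ 3
          = ((R.filter (fun t => t.1 = p.2)).card : ℝ) ^ 3
            / ((T.filter (fun q => q.2 = p.2)).card : ℝ) := by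
        intro p _
        rw [div_pow, hpow _ (by positivity)]
      rw [Finset.sum_congr rfl heq, hAdef]
      exact tri_aux_fiber_div_sum_le T Prod.snd
        (fun x => ((R.filter (fun t => t.1 = x)).card : ℝ) ^ 3) (fun x => by positivity)
    have hg3 : ∑ p ∈ T,
        (((S.filter (fun t => t.2 = p.1)).card : ℝ)
          / ((T.filter (fun q => q.1 = p.1)).card : ℝ) ^ ((1:ℝ)/3)) ^ 3 ≤ B := by
      have heq : ∀ p ∈ T, (((S.filter (fun t => t.2 = p.1)).card : ℝ)
          / ((T.filter (fun q => q.1 = p.1)).card : ℝ) ^ ((1:ℝ)/3)) ^ 3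
          = ((S.filter (fun t => t.2 = p.1)).card : ℝ) ^ 3
            / ((T.filter (fun q => q.1 = p.1)).card : ℝ) := by
        intro p _
        rw [div_pow, hpow _ (by positivity)]
      rw [Finset.sum_congr rfl heq, hBdef]
      exact tri_aux_fiber_div_sum_le T Prod.fst
        (fun z => ((S.filter (fun t => t.2 = z)).card : ℝ) ^ 3) (fun z => by positivity)
    have hh3 : ∑ p ∈ T,
        (((T.filter (fun q => q.2 = p.2)).card : ℝ) ^ ((1:ℝ)/3)
          * ((T.filter (fun q => q.1 = p.1)).card : ℝ) ^ ((1:ℝ)/3)) ^ 3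
        ≤ (T.card : ℝ) ^ 2 := by
      have heq : ∀ p ∈ T, (((T.filter (fun q => q.2 = p.2)).card : ℝ) ^ ((1:ℝ)/3)
          * ((T.filter (fun q => q.1 = p.1)).card : ℝ) ^ ((1:ℝ)/3)) ^ 3
          = ((T.filter (fun q => q.2 = p.2)).card : ℝ)
            * ((T.filter (fun q => q.1 = p.1)).card : ℝ) := by
        intro p _
        rw [mul_pow, hpow _ (by positivity), hpow _ (by positivity)]
      rw [Finset.sum_congr rfl heq]
      have := tri_aux_path_count T
      calc ∑ p ∈ T, ((T.filter (fun q => q.2 = p.2)).card : ℝ)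
            * ((T.filter (fun q => q.1 = p.1)).card : ℝ)
          = ((∑ p ∈ T, (T.filter (fun q => q.2 = p.2)).card
              * (T.filter (fun q => q.1 = p.1)).card : ℕ) : ℝ) := by push_cast; rfl
        _ ≤ ((T.card * T.card : ℕ) : ℝ) := by exact_mod_cast tri_aux_path_count T
        _ = (T.card : ℝ) ^ 2 := by push_cast; ring
    have hs1 : (0:ℝ) ≤ ∑ p ∈ T,
        (((S.filter (fun t => t.2 = p.1)).card : ℝ)
          / ((T.filter (fun q => q.1 = p.1)).card : ℝ) ^ ((1:ℝ)/3)) ^ 3 :=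
      Finset.sum_nonneg fun p _ => by positivity
    have hs2 : (0:ℝ) ≤ ∑ p ∈ T,
        (((T.filter (fun q => q.2 = p.2)).card : ℝ) ^ ((1:ℝ)/3)
          * ((T.filter (fun q => q.1 = p.1)).card : ℝ) ^ ((1:ℝ)/3)) ^ 3 :=
      Finset.sum_nonneg fun p _ => by positivity
    exact mul_le_mul hf3 (mul_le_mul hg3 hh3 hs2 hB0) (mul_nonneg hs1 hs2) hA0
  -- combine
  have key : (N : ℝ) ^ 6 ≤ A * B * (T.card : ℝ) ^ 5 := by
    calc (N : ℝ) ^ 6 = ((N : ℝ) ^ 2) ^ 3 := by ring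
      _ ≤ ((T.card : ℝ) * P) ^ 3 := by
          exact pow_le_pow_left₀ (sq_nonneg _) hN2 3
      _ = (T.card : ℝ) ^ 3 * P ^ 3 := by ring
      _ ≤ (T.card : ℝ) ^ 3 * (A * (B * (T.card : ℝ) ^ 2)) := by
          exact mul_le_mul_of_nonneg_left hP3 (by positivity)
      _ = A * B * (T.card : ℝ) ^ 5 := by ring
  calc (N : ℝ) = ((N : ℝ) ^ 6) ^ ((1:ℝ)/6) := by
        rw [← Real.rpow_natCast (N : ℝ) 6, ← Real.rpow_mul (Nat.cast_nonneg N)]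
        norm_num
    _ ≤ (A * B * (T.card : ℝ) ^ 5) ^ ((1:ℝ)/6) :=
        Real.rpow_le_rpow (by positivity) key (by norm_num)
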